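/- Let 𝒢 ⊆ ℝ^M be a convex set and F a conservative numerical flux that is invariant-region-preserving for 𝒢 with wave-speed bound λ > 0. Fix integers n_f ≥ 1, N ≥ 1, n_q ≥ 1 and data: surface weights ν_{f,l} ≥ 0 and unit normals n_{f,l} ∈ ℝ^d for f = 1,…,n_f and l = 1,…,N; interior surface states y_{f,l} ∈ 𝒢 and exterior surface states y⁻_{f,l} ∈ 𝒢 for all f, l; volume states y_v ∈ 𝒢 for v = 1,…,n_q; coefficients θ_v ≥ 0 and θ_{f,l} > 0 with Σ_v θ_v + Σ_{f,l} θ_{f,l} = 1; and reals |κ| > 0, Δt > 0. Set A_f = Σ_{l=1}^{N} ν_{f,l} and |∂κ| = Σ_{f=1}^{n_f} A_f, assume |∂κ| > 0, and assume the closure condition Σ_{f=1}^{n_f} Σ_{l=1}^{N} ν_{f,l}·F(a, a, n_{f,l}) = 0 for every a ∈ ℝ^M. Define ȳ = Σ_v θ_v·y_v + Σ_{f,l} θ_{f,l}·y_{f,l} and ȳ′ = ȳ − (Δt/|κ|)·Σ_{f,l} ν_{f,l}·F(y_{f,l}, y⁻_{f,l}, n_{f,l}). If Δt·λ/|κ|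 ≤ (1/2)·min{L_A, L_B, L_C}, where L_A = min{ θ_{f,l}/ν_{f,l} : 1 ≤ f ≤ n_f − 1, 1 ≤ l ≤ N, ν_{f,l} > 0 }, L_B = min{ (θ_{n_f,l}/ν_{f,l})·(A_f/|∂κ|) : 1 ≤ f ≤ n_f, 1 ≤ l ≤ N − 1, ν_{f,l} > 0 }, and L_C = θ_{n_f,N}/|∂κ| (minima over empty index sets are ignored), then ȳ′ ∈ 𝒢. -/

import Mathlib

open Finset

private lemma cfl_ratio {Δt lam κ ν θ : ℝ} (hκ : 0 < κ) (hν : 0 < ν) (hθ : 0 < θ)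
    (h : Δt * lam / κ ≤ 1 / 2 * (θ / ν)) : Δt / κ * (ν / θ) * lam ≤ 1 / 2 := by
  calc Δt / κ * (ν / θ) * lam = (Δt * lam / κ) * (ν / θ) := by ring
    _ ≤ (1 / 2 * (θ / ν)) * (ν / θ) := by
        exact mul_le_mul_of_nonneg_right h (by positivity)
    _ = 1 / 2 := by field_simp

private lemma sum_ite_sub {α : Type*} [Fintype α] [DecidableEq α] {Mo : Type*} [AddCommGroup Mo]
    (b : α) (g : α → Mo) :
    ∑ a, (if a = b then 0 else g a) = (∑ a, g a) - g b := by
  have h : ∀ a : α, (if a = b then (0:Mo) else g a) = g a - (if a = b then g a else 0) := by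
    intro a; split <;> simp
  simp_rw [h, Finset.sum_sub_distrib, Finset.sum_ite_eq' Finset.univ b g, Finset.mem_univ, if_true]

/-- Theorem 1 of the paper: the multidimensional CFL condition guaranteeing
that the evolved element average remains in the convex invariant set `G`. -/
theorem evolved_element_average_in_invariant_set
    (M d : ℕ)
    (G : Set (Fin M → ℝ)) (hGconv : Convex ℝ G)
    (F : (Fin M → ℝ) → (Fin M → ℝ) → (Fin d → ℝ) → (Fin M → ℝ))
    (lam : ℝ) (hlam : 0 < lam)
    -- `F` is conservative
    (hcons : ∀ a b n, F a b n = -(F b a (-n)))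
    -- `F` is invariant-region-preserving for `G` with wave-speed bound `lam`
    (hIRP : ∀ a ∈ G, ∀ b ∈ G, ∀ c ∈ G, ∀ n : Fin d → ℝ, (∑ k, n k ^ 2) = 1 →
      ∀ μ : ℝ, 0 ≤ μ → μ * lam ≤ 1 / 2 →
        a - μ • (F a b n + F a c (-n)) ∈ G)
    (nf N nq : ℕ) (hnf : 1 ≤ nf) (hN : 1 ≤ N) (hnq : 1 ≤ nq)
    -- surface weights (zero-padded) and unit normals
    (ν : Fin nf → Fin N → ℝ) (hν : ∀ f l, 0 ≤ ν f l)
    (nvec : Fin nf → Fin N → (Fin d → ℝ))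
    (hnvec : ∀ f l, (∑ k, nvec f l k ^ 2) = 1)
    -- interior and exterior surface states, and volume states, all in `G`
    (yin yout : Fin nf → Fin N → (Fin M → ℝ))
    (hyin : ∀ f l, yin f l ∈ G) (hyout : ∀ f l, yout f l ∈ G)
    (yv : Fin nq → (Fin M → ℝ)) (hyv : ∀ v, yv v ∈ G)
    -- convex-combination coefficients
    (θv : Fin nq → ℝ) (hθv : ∀ v, 0 ≤ θv v)
    (θs : Fin nf → Fin N → ℝ) (hθs : ∀ f l, 0 < θs f l)
    (hsum : (∑ v, θv v) + ∑ f, ∑ l, θs f l = 1)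
    (κvol Δt : ℝ) (hκ : 0 < κvol) (hΔt : 0 < Δt)
    -- face areas and total boundary area
    (A : Fin nf → ℝ) (hA : ∀ f, A f = ∑ l, ν f l)
    (bdry : ℝ) (hbdry : bdry = ∑ f, A f) (hbdrypos : 0 < bdry)
    -- closure condition (flux consistency + divergence theorem)
    (hclosure : ∀ a : Fin M → ℝ, (∑ f, ∑ l, ν f l • F a a (nvec f l)) = 0)
    -- the distinguished last face and last surface point
    (lastF : Fin nf) (hlastF : (lastF : ℕ) = nf - 1)
    (lastL : Fin N) (hlastL : (lastL : ℕ) = N - 1)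
    -- CFL condition: Δt·λ/|κ| ≤ (1/2)·min{L_A, L_B, L_C}
    (hLA : ∀ (f : Fin nf) (l : Fin N), (f : ℕ) < nf - 1 → 0 < ν f l →
      Δt * lam / κvol ≤ (1 / 2) * (θs f l / ν f l))
    (hLB : ∀ (f : Fin nf) (l : Fin N), (l : ℕ) < N - 1 → 0 < ν f l →
      Δt * lam / κvol ≤ (1 / 2) * ((θs lastF l / ν f l) * (A f / bdry)))
    (hLC : Δt * lam / κvol ≤ (1 / 2) * (θs lastF lastL / bdry))
    -- the element average and its evolution
    (ybar ybar' : Fin M → ℝ)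
    (hybar : ybar = (∑ v, θv v • yv v) + ∑ f, ∑ l, θs f l • yin f l)
    (hybar' : ybar' = ybar - (Δt / κvol) •
      ∑ f, ∑ l, ν f l • F (yin f l) (yout f l) (nvec f l)) :
    ybar' ∈ G := by
  classical
  have hbne : bdry ≠ 0 := ne_of_gt hbdrypos
  have hθhat : 0 < θs lastF lastL := hθs lastF lastL
  have hc0 : 0 ≤ Δt / κvol := by positivity
  have hAnn : ∀ f, 0 ≤ A f := fun f => (hA f) ▸ Finset.sum_nonneg (fun l _ => hν f l)
  have hνleA : ∀ f l, ν f l ≤ A f := fun f l =>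
    (hA f) ▸ Finset.single_le_sum (fun i _ => hν f i) (Finset.mem_univ l)
  have hsumA : (∑ f, A f) = bdry := hbdry.symm
  have hsumν : ∑ f, ∑ l, ν f l = bdry := by
    rw [hbdry]; exact Finset.sum_congr rfl (fun f _ => (hA f).symm)
  have hflt : ∀ f : Fin nf, f ≠ lastF → (f : ℕ) < nf - 1 := by
    intro f hf
    refine lt_of_le_of_ne (Nat.le_sub_one_of_lt f.isLt) ?_
    intro h; exact hf (Fin.ext (by rw [h, hlastF]))
  have hllt : ∀ l : Fin N, l ≠ lastL → (l : ℕ) < N - 1 := by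
    intro l hl
    refine lt_of_le_of_ne (Nat.le_sub_one_of_lt l.isLt) ?_
    intro h; exact hl (Fin.ext (by rw [h, hlastL]))
  -- the three families of weights and states ("blocks")
  set wA : Fin nf → Fin N → ℝ := fun f l => if f = lastF then 0 else θs f l with hwA
  set wB : Fin nf → Fin N → ℝ := fun f l =>
    if l = lastL then 0 else θs lastF l * A f / bdry with hwB
  set wC : Fin nf → Fin N → ℝ := fun f l => θs lastF lastL * ν f l / bdry with hwC
  set PA : Fin nf → Fin N → (Fin M → ℝ) := fun f l =>
    if f = lastF then yin lastF lastL else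
      yin f l - (Δt / κvol * (ν f l / θs f l)) •
        (F (yin f l) (yout f l) (nvec f l) + F (yin f l) (yin lastF l) (-(nvec f l))) with hPA
  set PB : Fin nf → Fin N → (Fin M → ℝ) := fun f l =>
    if l = lastL then yin lastF lastL else
      yin lastF l - (Δt / κvol * (ν f l * bdry / (θs lastF l * A f))) •
        (F (yin lastF l) (if f = lastF then yout f l else yin f l) (nvec f l)
          + F (yin lastF l) (yin lastF lastL) (-(nvec f l))) with hPB
  set PC : Fin nf → Fin N → (Fin M → ℝ) := fun f l =>
    yin lastF lastL - (Δt / κvol * (bdry / θs lastF lastL)) •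
      (F (yin lastF lastL)
          (if l = lastL then (if f = lastF then yout f l else yin f l) else yin lastF l)
          (nvec f l)
        + F (yin lastF lastL) (yin lastF lastL) (-(nvec f l))) with hPC
  -- membership of the blocks in G
  have hPAmem : ∀ f l, PA f l ∈ G := by
    intro f l
    simp only [hPA]
    by_cases hf : f = lastF
    · simp only [if_pos hf]; exact hyin lastF lastL
    · simp only [if_neg hf]
      refine hIRP _ (hyin f l) _ (hyout f l) _ (hyin lastF l) _ (hnvec f l) _
        (mul_nonneg hc0 (div_nonneg (hν f l) (hθs f l).le)) ?_
      rcases eq_or_lt_of_le (hν f l) with h0 | hpos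
      · simp only [← h0, zero_div, mul_zero, zero_mul]; norm_num
      · exact cfl_ratio hκ hpos (hθs f l) (hLA f l (hflt f hf) hpos)
  have hPBmem : ∀ f l, PB f l ∈ G := by
    intro f l
    simp only [hPB]
    by_cases hl : l = lastL
    · simp only [if_pos hl]; exact hyin lastF lastL
    · simp only [if_neg hl]
      have hbmem : (if f = lastF then yout f l else yin f l) ∈ G := by
        split_ifs
        · exact hyout f l
        · exact hyin f l
      refine hIRP _ (hyin lastF l) _ hbmem _ (hyin lastF lastL) _ (hnvec f l) _ ?_ ?_
      · exact mul_nonneg hc0 (div_nonneg (mul_nonneg (hν f l) hbdrypos.le)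
          (mul_nonneg (hθs lastF l).le (hAnn f)))
      · rcases eq_or_lt_of_le (hν f l) with h0 | hpos
        · simp only [← h0, zero_mul, zero_div, mul_zero]; norm_num
        · have hAf : 0 < A f := lt_of_lt_of_le hpos (hνleA f l)
          have h1 := hLB f l (hllt l hl) hpos
          rw [show (θs lastF l / ν f l) * (A f / bdry)
              = (θs lastF l * A f / bdry) / ν f l from by ring] at h1
          have h2 := cfl_ratio hκ hpos (div_pos (mul_pos (hθs lastF l) hAf) hbdrypos) h1
          rwa [show ν f l / (θs lastF l * A f / bdry)
              = ν f l * bdry / (θs lastF l * A f) from by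
            rw [div_div_eq_mul_div]] at h2
  have hPCmem : ∀ f l, PC f l ∈ G := by
    intro f l
    simp only [hPC]
    have hbmem : (if l = lastL then (if f = lastF then yout f l else yin f l)
        else yin lastF l) ∈ G := by
      split_ifs
      · exact hyout f l
      · exact hyin f l
      · exact hyin lastF l
    refine hIRP _ (hyin lastF lastL) _ hbmem _ (hyin lastF lastL) _ (hnvec f l)
      _ (mul_nonneg hc0 (div_nonneg hbdrypos.le hθhat.le)) ?_
    exact cfl_ratio hκ hbdrypos hθhat hLC
  -- nonnegativity of the weights
  have hwAnn : ∀ f l, 0 ≤ wA f l := by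
    intro f l; simp only [hwA]; split_ifs
    · exact le_refl 0
    · exact (hθs f l).le
  have hwBnn : ∀ f l, 0 ≤ wB f l := by
    intro f l; simp only [hwB]; split_ifs
    · exact le_refl 0
    · exact div_nonneg (mul_nonneg (hθs lastF l).le (hAnn f)) hbdrypos.le
  have hwCnn : ∀ f l, 0 ≤ wC f l := by
    intro f l; simp only [hwC]
    exact div_nonneg (mul_nonneg hθhat.le (hν f l)) hbdrypos.le
  -- scalar weight sums
  have hsumwA : ∑ f, ∑ l, wA f l = (∑ f, ∑ l, θs f l) - ∑ l, θs lastF l := by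
    have h : ∀ f : Fin nf, ∑ l, wA f l = (if f = lastF then 0 else ∑ l, θs f l) := by
      intro f; by_cases hf : f = lastF <;> simp [hwA, hf]
    rw [Finset.sum_congr rfl (fun f _ => h f), sum_ite_sub lastF (fun f => ∑ l, θs f l)]
  have hsumwBf : ∀ l : Fin N, ∑ f, wB f l = (if l = lastL then 0 else θs lastF l) := by
    intro l; by_cases hl : l = lastL
    · simp [hwB, hl]
    · simp only [hwB, if_neg hl]
      rw [← Finset.sum_div, ← Finset.mul_sum, hsumA, mul_div_assoc, div_self hbne, mul_one]
  have hsumwB : ∑ f, ∑ l, wB f l = (∑ l, θs lastF l) - θs lastF lastL := by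
    rw [Finset.sum_comm]
    rw [Finset.sum_congr rfl (fun l _ => hsumwBf l), sum_ite_sub lastL (fun l => θs lastF l)]
  have hsumwC : ∑ f, ∑ l, wC f l = θs lastF lastL := by
    simp only [hwC, ← Finset.sum_div, ← Finset.mul_sum]
    rw [hsumν, mul_div_assoc, div_self hbne, mul_one]
  -- vector base sums
  have hbaseA : ∑ f, ∑ l, wA f l • yin f l
      = (∑ f, ∑ l, θs f l • yin f l) - ∑ l, θs lastF l • yin lastF l := by
    have h : ∀ f : Fin nf, ∑ l, wA f l • yin f l
        = (if f = lastF then 0 else ∑ l, θs f l • yin f l) := by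
      intro f; by_cases hf : f = lastF <;> simp [hwA, hf]
    rw [Finset.sum_congr rfl (fun f _ => h f),
      sum_ite_sub lastF (fun f => ∑ l, θs f l • yin f l)]
  have hbaseB : ∑ f, ∑ l, wB f l • yin lastF l
      = (∑ l, θs lastF l • yin lastF l) - θs lastF lastL • yin lastF lastL := by
    rw [Finset.sum_comm]
    have h : ∀ l : Fin N, ∑ f, wB f l • yin lastF l
        = (if l = lastL then 0 else θs lastF l • yin lastF l) := by
      intro l
      rw [← Finset.sum_smul, hsumwBf l]
      split_ifs
      · exact zero_smul ℝ _
      · rfl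
    rw [Finset.sum_congr rfl (fun l _ => h l),
      sum_ite_sub lastL (fun l => θs lastF l • yin lastF l)]
  have hbaseC : ∑ f, ∑ l, wC f l • yin lastF lastL
      = θs lastF lastL • yin lastF lastL := by
    simp_rw [← Finset.sum_smul]
    rw [hsumwC]
  -- the per-quadrature-point identity
  have perpoint : ∀ f l, wA f l • PA f l + wB f l • PB f l + wC f l • PC f l
      = wA f l • yin f l + wB f l • yin lastF l + wC f l • yin lastF lastL
        - (Δt / κvol * ν f l) • F (yin f l) (yout f l) (nvec f l)
        + (Δt / κvol * ν f l) • F (yin lastF lastL) (yin lastF lastL) (nvec f l) := by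
    intro f l
    have hcons' : ∀ a b : Fin M → ℝ, F a b (-(nvec f l)) = -(F b a (nvec f l)) := by
      intro a b; rw [hcons a b (-(nvec f l)), neg_neg]
    have eA : θs f l * (Δt / κvol * (ν f l / θs f l)) = Δt / κvol * ν f l := by
      field_simp [hκ.ne', (hθs f l).ne']
    have eB : (θs lastF l * A f / bdry) * (Δt / κvol * (ν f l * bdry / (θs lastF l * A f)))
        = Δt / κvol * ν f l := by
      by_cases hAf : A f = 0
      · have hν0 : ν f l = 0 := le_antisymm (hAf ▸ hνleA f l) (hν f l)
        simp [hAf, hν0]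
      · field_simp [hbne, hκ.ne', (hθs lastF l).ne', hAf]
    have eC : (θs lastF lastL * ν f l / bdry) * (Δt / κvol * (bdry / θs lastF lastL))
        = Δt / κvol * ν f l := by
      field_simp [hbne, hκ.ne', hθhat.ne']
    rcases eq_or_ne f lastF with hf | hf
    · subst hf
      rcases eq_or_ne l lastL with hl | hl
      · subst hl
        simp only [hwA, hwB, hwC, hPA, hPB, hPC, if_pos rfl, if_true, zero_smul, zero_add, add_zero,
          hcons', smul_sub, smul_add, smul_neg, smul_smul, eC]
        abel
      · simp only [hwA, hwB, hwC, hPA, hPB, hPC, if_pos rfl, if_true, if_neg hl, zero_smul, zero_add,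
          hcons', smul_sub, smul_add, smul_neg, smul_smul, eB, eC]
        abel
    · rcases eq_or_ne l lastL with hl | hl
      · subst hl
        simp only [hwA, hwB, hwC, hPA, hPB, hPC, if_pos rfl, if_true, if_neg hf, zero_smul, add_zero,
          hcons', smul_sub, smul_add, smul_neg, smul_smul, eA, eC]
        abel
      · simp only [hwA, hwB, hwC, hPA, hPB, hPC, if_neg hf, if_neg hl,
          hcons', smul_sub, smul_add, smul_neg, smul_smul, eA, eB, eC]
        abel
  -- flux sums
  have hflux : ∑ f, ∑ l, (Δt / κvol * ν f l) • F (yin f l) (yout f l) (nvec f l)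
      = (Δt / κvol) • ∑ f, ∑ l, ν f l • F (yin f l) (yout f l) (nvec f l) := by
    simp_rw [mul_smul, ← Finset.smul_sum]
  have hclose : ∑ f, ∑ l, (Δt / κvol * ν f l) •
      F (yin lastF lastL) (yin lastF lastL) (nvec f l) = 0 := by
    have h : ∑ f, ∑ l, (Δt / κvol * ν f l) • F (yin lastF lastL) (yin lastF lastL) (nvec f l)
        = (Δt / κvol) • ∑ f, ∑ l, ν f l • F (yin lastF lastL) (yin lastF lastL) (nvec f l) := by
      simp_rw [mul_smul, ← Finset.smul_sum]
    rw [h, hclosure (yin lastF lastL), smul_zero]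
  -- the key algebraic identity
  have hkey : (∑ f, ∑ l, wA f l • PA f l)
      + ((∑ f, ∑ l, wB f l • PB f l) + (∑ f, ∑ l, wC f l • PC f l))
      = ybar' - ∑ v, θv v • yv v := by
    have e1 : ∑ f, ∑ l, (wA f l • PA f l + wB f l • PB f l + wC f l • PC f l)
        = (∑ f, ∑ l, wA f l • PA f l)
          + ((∑ f, ∑ l, wB f l • PB f l) + (∑ f, ∑ l, wC f l • PC f l)) := by
      simp_rw [Finset.sum_add_distrib]; abel
    rw [← e1, Finset.sum_congr rfl (fun f _ => Finset.sum_congr rfl (fun l _ => perpoint f l))]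
    simp only [Finset.sum_add_distrib, Finset.sum_sub_distrib]
    rw [hbaseA, hbaseB, hbaseC, hflux, hclose, hybar', hybar]
    abel
  -- total weight is 1
  have hwsum : (∑ v, θv v)
      + ((∑ f, ∑ l, wA f l) + ((∑ f, ∑ l, wB f l) + (∑ f, ∑ l, wC f l))) = 1 := by
    rw [hsumwA, hsumwB, hsumwC]; linarith [hsum]
  -- assemble the convex combination over a sum type
  set ι := (Fin nq) ⊕ ((Fin nf × Fin N) ⊕ ((Fin nf × Fin N) ⊕ (Fin nf × Fin N))) with hι
  set W : ι → ℝ := Sum.elim θv (Sum.elim (fun p => wA p.1 p.2)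
    (Sum.elim (fun p => wB p.1 p.2) (fun p => wC p.1 p.2))) with hW
  set P : ι → (Fin M → ℝ) := Sum.elim yv (Sum.elim (fun p => PA p.1 p.2)
    (Sum.elim (fun p => PB p.1 p.2) (fun p => PC p.1 p.2))) with hP
  have hmem : (∑ i, W i • P i) ∈ G := by
    apply hGconv.sum_mem
    · intro i _
      rcases i with v | p | p | p <;>
        simp only [hW, Sum.elim_inl, Sum.elim_inr]
      · exact hθv v
      · exact hwAnn p.1 p.2
      · exact hwBnn p.1 p.2
      · exact hwCnn p.1 p.2
    · rw [Fintype.sum_sum_type, Fintype.sum_sum_type, Fintype.sum_sum_type]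
      simp only [hW, Sum.elim_inl, Sum.elim_inr]
      rw [Fintype.sum_prod_type, Fintype.sum_prod_type, Fintype.sum_prod_type]
      exact hwsum
    · intro i _
      rcases i with v | p | p | p <;>
        simp only [hP, Sum.elim_inl, Sum.elim_inr]
      · exact hyv v
      · exact hPAmem p.1 p.2
      · exact hPBmem p.1 p.2
      · exact hPCmem p.1 p.2
  have hexp : (∑ i, W i • P i)
      = (∑ v, θv v • yv v) + ((∑ f, ∑ l, wA f l • PA f l)
        + ((∑ f, ∑ l, wB f l • PB f l) + (∑ f, ∑ l, wC f l • PC f l))) := by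
    rw [Fintype.sum_sum_type, Fintype.sum_sum_type, Fintype.sum_sum_type]
    simp only [hW, hP, Sum.elim_inl, Sum.elim_inr]
    rw [Fintype.sum_prod_type, Fintype.sum_prod_type, Fintype.sum_prod_type]
  rw [hexp, hkey] at hmem
  have hfin : (∑ v, θv v • yv v) + (ybar' - ∑ v, θv v • yv v) = ybar' := by abel
  rwa [hfin] at hmem
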